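/- arXiv:2006.03900 — 2 statements merged into one kernel-verified Lean document; each statement's English description precedes it below -/
import Mathlib

section
/- Let k : ℝ → ℝ be a C¹ kernel with compact support, ∫ k = 1, ∫ u k(u) du = 0, M₂ = ∫ u² k(u) du < ∞. Let f : ℝ → ℝ be three times continuously differentiable. Then ∫ −h⁻² k'((a − x)/h)·f(a) da − f'(x) = (h²/2)·M₂·f'''(x) + o(h²) as h → 0⁺. -/
open MeasureTheory Filter Topology Asymptotics

lemma abs_sub_le_of_mem_uIcc {x y s : ℝ} (hs : s ∈ Set.uIcc x y) : |s - x| ≤ |y - x| := by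
  rw [Set.mem_uIcc] at hs
  rcases hs with ⟨h1, h2⟩ | ⟨h1, h2⟩
  · rw [abs_of_nonneg (by linarith), abs_of_nonneg (by linarith)]; linarith
  · rw [abs_of_nonpos (by linarith), abs_of_nonpos (by linarith)]; linarith

lemma quad_bound {F F' F'' : ℝ → ℝ} (hF : ∀ y, HasDerivAt F (F' y) y)
    (hF' : ∀ y, HasDerivAt F' (F'' y) y) {x y ε : ℝ}
    (hFx : F x = 0) (hF'x : F' x = 0)
    (hb : ∀ s ∈ Set.uIcc x y, |F'' s| ≤ ε) : |F y| ≤ ε * (y - x) ^ 2 := by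
  have hconv : Convex ℝ (Set.uIcc x y) := by rw [Set.uIcc]; exact convex_Icc _ _
  have step1 : ∀ s ∈ Set.uIcc x y, |F' s| ≤ ε * |y - x| := by
    intro s hs
    have hconv2 : Convex ℝ (Set.uIcc x s) := by rw [Set.uIcc]; exact convex_Icc _ _
    have hsub : Set.uIcc x s ⊆ Set.uIcc x y := Set.uIcc_subset_uIcc Set.left_mem_uIcc hs
    have H := hconv2.norm_image_sub_le_of_norm_hasDerivWithin_le
      (fun t _ => (hF' t).hasDerivWithinAt) (fun t ht => hb t (hsub ht))
      Set.left_mem_uIcc Set.right_mem_uIcc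
    rw [hF'x, sub_zero] at H
    calc |F' s| ≤ ε * ‖s - x‖ := H
      _ ≤ ε * |y - x| := by
          have hε : 0 ≤ ε := le_trans (abs_nonneg _) (hb x Set.left_mem_uIcc)
          exact mul_le_mul_of_nonneg_left (abs_sub_le_of_mem_uIcc hs) hε
  have H := hconv.norm_image_sub_le_of_norm_hasDerivWithin_le
    (fun t _ => (hF t).hasDerivWithinAt) step1 Set.left_mem_uIcc Set.right_mem_uIcc
  rw [hFx, sub_zero] at H
  calc |F y| ≤ ε * |y - x| * ‖y - x‖ := H
    _ = ε * (y - x) ^ 2 := by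
        rw [Real.norm_eq_abs, mul_assoc, ← abs_mul, ← sq, abs_of_nonneg (sq_nonneg _)]

/-- Bias expansion for kernel-based derivative estimation: the convolution of `f` with the
differentiated kernel converges to `f'(x)` with second-order bias governed by `f'''`. -/
theorem stmt2 (k f : ℝ → ℝ) (hk : ContDiff ℝ 1 k) (hsupp : HasCompactSupport k)
    (hk1 : ∫ u, k u = 1) (hk2 : ∫ u, u * k u = 0)
    (hM2 : Integrable (fun u => u ^ 2 * k u))
    (hf : ContDiff ℝ 3 f) (x : ℝ) :
    (fun h : ℝ =>
        (∫ a, -(h ^ 2)⁻¹ * deriv k ((a - x) / h) * f a) - deriv f x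
          - h ^ 2 / 2 * (∫ u, u ^ 2 * k u) * iteratedDeriv 3 f x)
      =o[𝓝[>] (0 : ℝ)] fun h => h ^ 2 := by
  -- basic regularity facts
  have hc_k : Continuous k := hk.continuous
  have hc_k' : Continuous (deriv k) := hk.continuous_deriv le_rfl
  have hsupp' : HasCompactSupport (deriv k) := hsupp.deriv
  have hfd : Differentiable ℝ f := hf.differentiable (by norm_num)
  have hf1c : ContDiff ℝ 2 (deriv f) :=
    (contDiff_succ_iff_deriv.mp (hf.of_le (by norm_num))).2.2
  have hf1d : Differentiable ℝ (deriv f) := hf1c.differentiable (by norm_num)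
  have hf1cont : Continuous (deriv f) := hf1c.continuous
  have hf2c : ContDiff ℝ 1 (deriv (deriv f)) :=
    (contDiff_succ_iff_deriv.mp (hf1c.of_le (by norm_num))).2.2
  have hf2d : Differentiable ℝ (deriv (deriv f)) := hf2c.differentiable one_ne_zero
  have hf3c : Continuous (deriv (deriv (deriv f))) := hf2c.continuous_deriv le_rfl
  have hit3 : iteratedDeriv 3 f = deriv (deriv (deriv f)) := by
    rw [show (3 : ℕ) = 2 + 1 from rfl, iteratedDeriv_succ,
      show (2 : ℕ) = 1 + 1 from rfl, iteratedDeriv_succ, iteratedDeriv_one]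
  -- integrability of kernel moments
  have hik : Integrable k := hc_k.integrable_of_hasCompactSupport hsupp
  have hik1 : Integrable (fun u => u * k u) :=
    (continuous_id.mul hc_k).integrable_of_hasCompactSupport hsupp.mul_left
  -- key identity: integration by parts and change of variables
  have key : ∀ h : ℝ, 0 < h →
      (∫ a, -(h ^ 2)⁻¹ * deriv k ((a - x) / h) * f a)
        = ∫ u, k u * deriv f (x + h * u) := by
    intro h h0'
    have h0 : h ≠ 0 := ne_of_gt h0'
    set φ : ℝ ≃ₜ ℝ := affineHomeomorph h⁻¹ (-(x / h)) (inv_ne_zero h0) with hφ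
    have hφa : ∀ a : ℝ, (φ : ℝ → ℝ) a = (a - x) / h := by
      intro a; simp [hφ, affineHomeomorph]; field_simp; ring
    set u : ℝ → ℝ := fun a => k ((a - x) / h) with hu_def
    set u' : ℝ → ℝ := fun a => deriv k ((a - x) / h) * h⁻¹ with hu'_def
    have hcsu : HasCompactSupport u := by
      have : u = k ∘ φ := by funext a; simp [hu_def, Function.comp, hφa]
      rw [this]; exact hsupp.comp_homeomorph φ
    have hcsw : HasCompactSupport (fun a => deriv k ((a - x) / h)) := by
      have : (fun a => deriv k ((a - x) / h)) = (deriv k) ∘ φ := by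
        funext a; simp [Function.comp, hφa]
      rw [this]; exact hsupp'.comp_homeomorph φ
    have hcsu' : HasCompactSupport u' := hcsw.mul_right
    have hu_c : Continuous u := hc_k.comp (by continuity)
    have hu'_c : Continuous u' := (hc_k'.comp (by continuity)).mul continuous_const
    have hu : ∀ a, HasDerivAt u (u' a) a := by
      intro a
      have hinner : HasDerivAt (fun a : ℝ => (a - x) / h) h⁻¹ a := by
        simpa [one_div] using ((hasDerivAt_id a).sub_const x).div_const h
      exact ((hk.differentiable one_ne_zero ((a - x) / h)).hasDerivAt.comp a hinner)
    have hv : ∀ a, HasDerivAt f (deriv f a) a := fun a => (hfd a).hasDerivAt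
    have hI1 : Integrable (u * deriv f) :=
      (hu_c.mul hf1cont).integrable_of_hasCompactSupport hcsu.mul_right
    have hI2 : Integrable (u' * f) :=
      (hu'_c.mul hf.continuous).integrable_of_hasCompactSupport hcsu'.mul_right
    have hI3 : Integrable (u * f) :=
      (hu_c.mul hf.continuous).integrable_of_hasCompactSupport hcsu.mul_right
    have ibp := integral_mul_deriv_eq_deriv_mul_of_integrable (fun a _ => hu a) (fun a _ => hv a) hI1 hI2 hI3
    have e0 : (fun a => -(h ^ 2)⁻¹ * deriv k ((a - x) / h) * f a)
        = fun a => (-h⁻¹) * (u' a * f a) := by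
      funext a; simp only [hu'_def]; rw [pow_two, mul_inv]; ring
    rw [e0, integral_const_mul]
    have e1 : (∫ a, u' a * f a) = - ∫ a, u a * deriv f a := by
      linarith [ibp]
    rw [e1]
    set G : ℝ → ℝ := fun w => k w * deriv f (x + h * w) with hG
    have e2 : (fun a => u a * deriv f a) = fun a => G ((a - x) / h) := by
      funext a
      have : x + h * ((a - x) / h) = a := by field_simp; ring
      simp only [hG, hu_def, this]
    have e3 : (∫ a, u a * deriv f a) = ∫ b, G (b / h) := by
      rw [e2]
      exact integral_sub_right_eq_self (fun b => G (b / h)) x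
    rw [e3, MeasureTheory.Measure.integral_comp_div G h, abs_of_pos h0', smul_eq_mul]
    field_simp
  -- expansion of the bias
  have expand : ∀ h : ℝ, 0 < h →
      ((∫ a, -(h ^ 2)⁻¹ * deriv k ((a - x) / h) * f a) - deriv f x
        - h ^ 2 / 2 * (∫ u, u ^ 2 * k u) * iteratedDeriv 3 f x)
      = ∫ u, k u * (deriv f (x + h * u) - deriv f x - h * u * deriv (deriv f) x
          - (h * u) ^ 2 / 2 * deriv (deriv (deriv f)) x) := by
    intro h h0
    have hTI : Integrable (fun u => k u * deriv f (x + h * u)) :=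
      (hc_k.mul (hf1cont.comp (continuous_const.add
        (continuous_const.mul continuous_id)))).integrable_of_hasCompactSupport hsupp.mul_right
    have hA1 : Integrable (fun u => k u * deriv f (x + h * u) - deriv f x * k u) :=
      hTI.sub (hik.const_mul (deriv f x))
    have hA2 : Integrable (fun u => k u * deriv f (x + h * u) - deriv f x * k u
        - h * deriv (deriv f) x * (u * k u)) :=
      hA1.sub (hik1.const_mul (h * deriv (deriv f) x))
    have efun : (fun u => k u * (deriv f (x + h * u) - deriv f x - h * u * deriv (deriv f) x
          - (h * u) ^ 2 / 2 * deriv (deriv (deriv f)) x))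
        = fun u => k u * deriv f (x + h * u) - deriv f x * k u
            - h * deriv (deriv f) x * (u * k u)
            - h ^ 2 / 2 * deriv (deriv (deriv f)) x * (u ^ 2 * k u) := by
      funext u; ring
    rw [efun,
      integral_sub hA2 (hM2.const_mul _),
      integral_sub hA1 (hik1.const_mul _),
      integral_sub hTI (hik.const_mul _),
      integral_const_mul, integral_const_mul, integral_const_mul, hk1, hk2, key h h0, hit3]
    ring
  -- the little-o estimate
  rw [isLittleO_iff]
  intro ε hε
  set C := ∫ u, |u ^ 2 * k u| with hCdef
  have hC0 : 0 ≤ C := integral_nonneg fun u => abs_nonneg _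
  set ε' := ε / (C + 1) with hε'def
  have hε'0 : 0 < ε' := div_pos hε (by linarith)
  obtain ⟨δ, hδ0, hδ⟩ := Metric.continuousAt_iff.mp
    (show ContinuousAt (deriv (deriv (deriv f))) x from hf3c.continuousAt) ε' hε'0
  obtain ⟨R, hR⟩ := (Metric.isBounded_iff_subset_closedBall 0).mp hsupp.isBounded
  set R' := max R 1 with hR'def
  have hR'1 : (1 : ℝ) ≤ R' := le_max_right _ _
  have hR'0 : 0 < R' := lt_of_lt_of_le one_pos hR'1
  filter_upwards [Ioo_mem_nhdsGT_of_mem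
    (Set.mem_Ico.mpr ⟨le_refl (0 : ℝ), div_pos hδ0 hR'0⟩)] with h hh
  obtain ⟨h0, hhδ⟩ := hh
  rw [expand h h0]
  set Rm : ℝ → ℝ := fun u => deriv f (x + h * u) - deriv f x - h * u * deriv (deriv f) x
      - (h * u) ^ 2 / 2 * deriv (deriv (deriv f)) x with hRm
  have hptb : ∀ u, ‖k u * Rm u‖ ≤ ε' * h ^ 2 * |u ^ 2 * k u| := by
    intro u
    by_cases hku : k u = 0
    · simp [hku]
    · have hu_mem : u ∈ Metric.closedBall (0 : ℝ) R :=
        hR (subset_tsupport k (Function.mem_support.mpr hku))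
      have huR : |u| ≤ R' := by
        have hd := Metric.mem_closedBall.mp hu_mem
        rw [Real.dist_eq, sub_zero] at hd
        exact le_trans hd (le_max_left _ _)
      have key2 : |Rm u| ≤ ε' * (h * u) ^ 2 := by
        set F : ℝ → ℝ := fun t => deriv f t - deriv f x - (t - x) * deriv (deriv f) x
            - (t - x) ^ 2 / 2 * deriv (deriv (deriv f)) x with hF
        set F' : ℝ → ℝ := fun t => deriv (deriv f) t - deriv (deriv f) x
            - (t - x) * deriv (deriv (deriv f)) x with hF'
        have hFd : ∀ t, HasDerivAt F (F' t) t := by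
          intro t
          have A1 : HasDerivAt (fun t => deriv f t) (deriv (deriv f) t) t := (hf1d t).hasDerivAt
          have A2 : HasDerivAt (fun t : ℝ => (t - x) * deriv (deriv f) x)
              (deriv (deriv f) x) t := by
            simpa using ((hasDerivAt_id t).sub_const x).mul_const (deriv (deriv f) x)
          have A3 : HasDerivAt (fun t : ℝ => (t - x) ^ 2 / 2 * deriv (deriv (deriv f)) x)
              ((t - x) * deriv (deriv (deriv f)) x) t := by
            have h3 := ((((hasDerivAt_id t).sub_const x).pow 2).div_const 2).mul_const
              (deriv (deriv (deriv f)) x)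
            refine h3.congr_deriv ?_
            simp only [id_eq]
            push_cast
            ring
          exact ((A1.sub_const _).sub A2).sub A3
        have hF'd : ∀ t, HasDerivAt F'
            (deriv (deriv (deriv f)) t - deriv (deriv (deriv f)) x) t := by
          intro t
          have A1 : HasDerivAt (fun t => deriv (deriv f) t)
              (deriv (deriv (deriv f)) t) t := (hf2d t).hasDerivAt
          have A2 : HasDerivAt (fun t : ℝ => (t - x) * deriv (deriv (deriv f)) x)
              (deriv (deriv (deriv f)) x) t := by
            simpa using ((hasDerivAt_id t).sub_const x).mul_const _
          exact (A1.sub_const _).sub A2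
        have hb : ∀ s ∈ Set.uIcc x (x + h * u),
            |deriv (deriv (deriv f)) s - deriv (deriv (deriv f)) x| ≤ ε' := by
          intro s hs
          have h1 : |s - x| ≤ |h * u| := by
            simpa using abs_sub_le_of_mem_uIcc hs
          have h2 : |h * u| < δ := by
            rw [abs_mul, abs_of_pos h0]
            calc h * |u| ≤ h * R' := mul_le_mul_of_nonneg_left huR h0.le
              _ < δ := (lt_div_iff₀ hR'0).mp hhδ
          have hdist := hδ (show dist s x < δ by rw [Real.dist_eq]; exact lt_of_le_of_lt h1 h2)
          rw [Real.dist_eq] at hdist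
          exact hdist.le
        have hFx : F x = 0 := by simp [hF]
        have hF'x : F' x = 0 := by simp [hF']
        have hqb := quad_bound hFd hF'd hFx hF'x hb
        have eRm : Rm u = F (x + h * u) := by
          simp only [hRm, hF, add_sub_cancel_left]
        rw [eRm]
        calc |F (x + h * u)| ≤ ε' * (x + h * u - x) ^ 2 := hqb
          _ = ε' * (h * u) ^ 2 := by ring
      calc ‖k u * Rm u‖ = |k u| * |Rm u| := by rw [Real.norm_eq_abs, abs_mul]
        _ ≤ |k u| * (ε' * (h * u) ^ 2) := mul_le_mul_of_nonneg_left key2 (abs_nonneg _)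
        _ = ε' * h ^ 2 * |u ^ 2 * k u| := by
            rw [abs_mul, abs_pow, sq_abs]; ring
  have hIprod : Integrable (fun u => k u * Rm u) := by
    have hRmc : Continuous Rm := by
      have c1 : Continuous fun u : ℝ => x + h * u :=
        continuous_const.add (continuous_const.mul continuous_id)
      exact (((hf1cont.comp c1).sub continuous_const).sub
        ((continuous_const.mul continuous_id).mul continuous_const)).sub
        ((((continuous_const.mul continuous_id).pow 2).div_const 2).mul continuous_const)
    exact (hc_k.mul hRmc).integrable_of_hasCompactSupport hsupp.mul_right
  calc ‖∫ u, k u * Rm u‖ ≤ ∫ u, ‖k u * Rm u‖ := norm_integral_le_integral_norm _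
    _ ≤ ∫ u, ε' * h ^ 2 * |u ^ 2 * k u| :=
        integral_mono hIprod.norm ((hM2.abs).const_mul _) hptb
    _ = ε' * h ^ 2 * C := by rw [integral_const_mul]
    _ ≤ ε * ‖h ^ 2‖ := by
        rw [Real.norm_eq_abs, abs_of_nonneg (sq_nonneg h)]
        have hle : ε' * C ≤ ε := by
          rw [hε'def, div_mul_eq_mul_div, div_le_iff₀ (by linarith)]
          nlinarith
        nlinarith [sq_nonneg h]
end

section
/- Let w : 𝒮 → ℝ satisfy 0 ≤ w ≤ C₂ and π : 𝒮 × [0,1] → ℝ satisfy π ≥ 1/C₁ > 0, let τ : 𝒮 → (0,1), and let rewards be bounded: |r_t| ≤ R_max for t = 1, …, H. Then ∑_{t=1}^H E[ (w(s_t)/π(τ(s_t)|s_t)) · Var[r_t + v_{t+1}(s_{t+1}) | s_t, τ(s_t)] ] ≤ C₁ C₂ R_max² H², where v_{t+1}(s) = E[∑_{j=t+1}^H r_j | s_{t+1} = s] under the evaluation policy (so v_{H+1} ≡ 0 and |r_t + v_{t+1}| ≤ H·R_max). -/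
open MeasureTheory Filter

/-- Conditional variance decomposition: for a bounded function `f`,
`∫ (f - E[f|m])² = ∫ f² - ∫ (E[f|m])²`. -/
lemma var_decomp {Ω : Type*} {m0 : MeasurableSpace Ω} {μ : Measure Ω} [IsProbabilityMeasure μ]
    {m : MeasurableSpace Ω} (hm : m ≤ m0) {f : Ω → ℝ} (hfm : AEStronglyMeasurable[m0] f μ)
    {C : ℝ} (hC : 0 ≤ C) (hbd : ∀ᵐ ω ∂μ, |f ω| ≤ C) :
    ∫ ω, (f ω - (μ[f|m]) ω) ^ 2 ∂μ
      = (∫ ω, (f ω) ^ 2 ∂μ) - ∫ ω, ((μ[f|m]) ω) ^ 2 ∂μ := by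
  have hf2 : MemLp f 2 μ := MemLp.of_bound hfm C (by simpa [Real.norm_eq_abs] using hbd)
  have hfi : Integrable f μ := hf2.integrable one_le_two
  set g := μ[f|m] with hg
  have hgm : AEStronglyMeasurable[m0] g μ :=
    (stronglyMeasurable_condExp.mono hm).aestronglyMeasurable
  have hgbd : ∀ᵐ ω ∂μ, |g ω| ≤ C := by
    have h := ae_bdd_condExp_of_ae_bdd (μ := μ) (m := m) (R := ⟨C, hC⟩) (f := f)
      (by exact hbd)
    exact h
  have hg2 : MemLp g 2 μ := MemLp.of_bound hgm C (by simpa [Real.norm_eq_abs] using hgbd)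
  have hmul : Integrable (g * f) μ := by
    rw [← memLp_one_iff_integrable]
    refine MemLp.of_bound (hgm.mul hfm) (C * C) ?_
    filter_upwards [hbd, hgbd] with ω h1 h2
    simp only [Pi.mul_apply, Real.norm_eq_abs, abs_mul]
    exact mul_le_mul h2 h1 (abs_nonneg _) hC
  have key : ∫ ω, g ω * f ω ∂μ = ∫ ω, (g ω) ^ 2 ∂μ := by
    have h1 : μ[g * f|m] =ᵐ[μ] g * μ[f|m] :=
      condExp_mul_of_stronglyMeasurable_left stronglyMeasurable_condExp hmul hfi
    calc ∫ ω, g ω * f ω ∂μ = ∫ ω, (g * f) ω ∂μ := rfl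
      _ = ∫ ω, (μ[g * f|m]) ω ∂μ := (integral_condExp hm).symm
      _ = ∫ ω, (g * μ[f|m]) ω ∂μ := integral_congr_ae h1
      _ = ∫ ω, (g ω) ^ 2 ∂μ := by
          refine integral_congr_ae (Eventually.of_forall fun ω => ?_)
          simp [← hg, pow_two]
  have hf_sq : Integrable (fun ω => (f ω) ^ 2) μ := hf2.integrable_sq
  have hg_sq : Integrable (fun ω => (g ω) ^ 2) μ := hg2.integrable_sq
  have expand : ∫ ω, (f ω - g ω) ^ 2 ∂μ
      = ∫ ω, ((f ω) ^ 2 - 2 * (g ω * f ω) + (g ω) ^ 2) ∂μ :=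
    integral_congr_ae (Eventually.of_forall fun ω => by ring)
  have hmul2 : Integrable (fun ω => 2 * (g ω * f ω)) μ := by
    have := hmul.const_mul 2
    simpa using this
  have h1 : ∫ ω, ((f ω) ^ 2 - 2 * (g ω * f ω) + (g ω) ^ 2) ∂μ
      = (∫ ω, ((f ω) ^ 2 - 2 * (g ω * f ω)) ∂μ) + ∫ ω, (g ω) ^ 2 ∂μ :=
    integral_add (hf_sq.sub hmul2) hg_sq
  have h2 : ∫ ω, ((f ω) ^ 2 - 2 * (g ω * f ω)) ∂μ
      = (∫ ω, (f ω) ^ 2 ∂μ) - ∫ ω, 2 * (g ω * f ω) ∂μ := integral_sub hf_sq hmul2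
  have h3 : ∫ ω, 2 * (g ω * f ω) ∂μ = 2 * ∫ ω, g ω * f ω ∂μ := integral_const_mul 2 _
  rw [expand, h1, h2, h3, key]
  ring

/-- Horizon-polynomial bound on the leading variance constant of the marginalized DR
estimator: `∑ₜ E[(w(sₜ)/π(τ(sₜ)|sₜ)) Var[rₜ + v_{t+1} | ℱₜ]] ≤ C₁C₂R_max²H²`, where
`vₜ` is the conditional expectation of the future return. -/
theorem stmt16 {Ω 𝒮 : Type*} [m0 : MeasurableSpace Ω] [MeasurableSpace 𝒮]
    (μ : Measure Ω) [IsProbabilityMeasure μ]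
    (H : ℕ) (hH : 1 ≤ H)
    (ℱ : ℕ → MeasurableSpace Ω) (hmono : Monotone ℱ) (hle : ∀ t, ℱ t ≤ m0)
    (s : ℕ → Ω → 𝒮) (hs : ∀ t, Measurable[ℱ t] (s t))
    (r : ℕ → Ω → ℝ) (hr : ∀ t, MemLp (r t) 2 μ)
    (hradapt : ∀ t, Measurable[ℱ (t + 1)] (r t))
    (R_max C₁ C₂ : ℝ) (hRb : ∀ t ω, |r t ω| ≤ R_max)
    (w : 𝒮 → ℝ) (π : 𝒮 → ℝ)
    (hw0 : ∀ x, 0 ≤ w x) (hwC : ∀ x, w x ≤ C₂)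
    (hC₁ : 0 < C₁) (hπ : ∀ x, 1 / C₁ ≤ π x) :
    (∑ t ∈ Finset.range H,
        ∫ ω,
          (w (s t ω) / π (s t ω)) *
            (μ[fun ω' =>
                (r t ω' + (μ[fun ω'' => ∑ j ∈ Finset.Ico (t + 1) H, r j ω'' | ℱ (t + 1)]) ω'
                    - (μ[fun ω'' => ∑ j ∈ Finset.Ico t H, r j ω'' | ℱ t]) ω') ^ 2
               | ℱ t]) ω ∂μ)
      ≤ C₁ * C₂ * R_max ^ 2 * H ^ 2 := by
  have hΩ : Nonempty Ω := by
    by_contra h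
    rw [not_nonempty_iff] at h
    have h0 : μ Set.univ = 0 := by
      rw [Set.univ_eq_empty_iff.mpr h]; exact measure_empty
    simp [measure_univ] at h0
  have hR0 : 0 ≤ R_max := le_trans (abs_nonneg _) (hRb 0 (Classical.arbitrary Ω))
  have hC₂ : 0 ≤ C₂ := le_trans (hw0 (s 0 (Classical.arbitrary Ω))) (hwC _)
  set K : ℝ := (H : ℝ) * R_max with hK
  have hK0 : 0 ≤ K := mul_nonneg (Nat.cast_nonneg _) hR0
  -- the partial future returns
  set S : ℕ → Ω → ℝ := fun t ω => ∑ j ∈ Finset.Ico t H, r j ω with hSdef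
  have hS2 : ∀ t, MemLp (S t) 2 μ := by
    intro t
    have h := memLp_finset_sum' (Finset.Ico t H) fun j _ => hr j
    have e : (∑ j ∈ Finset.Ico t H, r j) = S t := by
      funext ω; simp [hSdef]
    rwa [e] at h
  have hSi : ∀ t, Integrable (S t) μ := fun t => (hS2 t).integrable one_le_two
  have hSb : ∀ t ω, |S t ω| ≤ K := by
    intro t ω
    calc |S t ω| ≤ ∑ j ∈ Finset.Ico t H, |r j ω| := Finset.abs_sum_le_sum_abs _ _
      _ ≤ (Finset.Ico t H).card • R_max :=
          Finset.sum_le_card_nsmul _ _ _ fun j _ => hRb j ω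
      _ = ((Finset.Ico t H).card : ℝ) * R_max := by rw [nsmul_eq_mul]
      _ ≤ (H : ℝ) * R_max := by
          refine mul_le_mul_of_nonneg_right ?_ hR0
          have hc : (Finset.Ico t H).card ≤ H := by rw [Nat.card_Ico]; omega
          exact_mod_cast hc
  -- the total-return martingale
  set M : ℕ → Ω → ℝ := fun t => μ[S 0 | ℱ t] with hMdef
  have hMm : ∀ t, AEStronglyMeasurable (M t) μ := fun t =>
    (stronglyMeasurable_condExp.mono (hle t)).aestronglyMeasurable
  have hMb : ∀ t, ∀ᵐ ω ∂μ, |M t ω| ≤ K := by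
    intro t
    have h := ae_bdd_condExp_of_ae_bdd (μ := μ) (m := ℱ t) (R := ⟨K, hK0⟩) (f := S 0)
      (Eventually.of_forall fun ω => by exact hSb 0 ω)
    exact h
  -- partial past sums are measurable w.r.t. the filtration
  have hPmeas : ∀ u, Measurable[ℱ u] fun ω => ∑ j ∈ Finset.Ico 0 u, r j ω := by
    intro u
    refine Finset.measurable_sum _ fun j hj => ?_
    exact (hradapt j).mono (hmono (by simp at hj; omega)) le_rfl
  have hPint : ∀ u, Integrable (fun ω => ∑ j ∈ Finset.Ico 0 u, r j ω) μ := fun u =>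
    integrable_finset_sum _ fun j _ => (hr j).integrable one_le_two
  -- decomposition of the martingale
  have hdecomp : ∀ u, u ≤ H →
      M u =ᵐ[μ] fun ω => (∑ j ∈ Finset.Ico 0 u, r j ω) + (μ[S u | ℱ u]) ω := by
    intro u hu
    have hsplit : S 0 = (fun ω => ∑ j ∈ Finset.Ico 0 u, r j ω) + S u := by
      funext ω
      simp only [Pi.add_apply, hSdef]
      exact (Finset.sum_Ico_consecutive _ (Nat.zero_le u) hu).symm
    calc M u = μ[(fun ω => ∑ j ∈ Finset.Ico 0 u, r j ω) + S u | ℱ u] := by rw [hMdef, hsplit]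
      _ =ᵐ[μ] μ[fun ω => ∑ j ∈ Finset.Ico 0 u, r j ω | ℱ u] + μ[S u | ℱ u] :=
          condExp_add (hPint u) (hSi u) (ℱ u)
      _ = fun ω => (∑ j ∈ Finset.Ico 0 u, r j ω) + (μ[S u | ℱ u]) ω := by
          rw [condExp_of_stronglyMeasurable (hle u) ((hPmeas u).stronglyMeasurable) (hPint u)]
          rfl
  -- per-step bound
  have hterm : ∀ t ∈ Finset.range H,
      (∫ ω, (w (s t ω) / π (s t ω)) *
          (μ[fun ω' =>
              (r t ω' + (μ[fun ω'' => ∑ j ∈ Finset.Ico (t + 1) H, r j ω'' | ℱ (t + 1)]) ω'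
                  - (μ[fun ω'' => ∑ j ∈ Finset.Ico t H, r j ω'' | ℱ t]) ω') ^ 2
             | ℱ t]) ω ∂μ)
        ≤ C₁ * C₂ * ((∫ ω, (M (t + 1) ω) ^ 2 ∂μ) - ∫ ω, (M t ω) ^ 2 ∂μ) := by
    intro t ht
    rw [Finset.mem_range] at ht
    set X : Ω → ℝ := fun ω' =>
      r t ω' + (μ[S (t + 1) | ℱ (t + 1)]) ω' - (μ[S t | ℱ t]) ω' with hXdef
    -- Step A : weight bound
    have hratio : ∀ x, w x / π x ≤ C₁ * C₂ := by
      intro x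
      have h1 : w x / π x ≤ C₂ / (1 / C₁) :=
        div_le_div₀ hC₂ (hwC x) (by positivity) (hπ x)
      calc w x / π x ≤ C₂ / (1 / C₁) := h1
        _ = C₁ * C₂ := by field_simp
    have hcond_nonneg : 0 ≤ᵐ[μ] μ[fun ω' => (X ω') ^ 2 | ℱ t] :=
      condExp_nonneg (Eventually.of_forall fun ω => sq_nonneg _)
    have hA : (∫ ω, (w (s t ω) / π (s t ω)) * (μ[fun ω' => (X ω') ^ 2 | ℱ t]) ω ∂μ)
        ≤ C₁ * C₂ * ∫ ω, (μ[fun ω' => (X ω') ^ 2 | ℱ t]) ω ∂μ := by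
      rw [← integral_const_mul]
      refine integral_mono_of_nonneg ?_ (integrable_condExp.const_mul _) ?_
      · filter_upwards [hcond_nonneg] with ω hω
        have hπ0 : 0 < π (s t ω) := lt_of_lt_of_le (by positivity) (hπ _)
        exact mul_nonneg (div_nonneg (hw0 _) hπ0.le) hω
      · filter_upwards [hcond_nonneg] with ω hω
        exact mul_le_mul_of_nonneg_right (hratio _) hω
    -- Step B : the conditional second moment integrates to ∫ X²
    have hB : (∫ ω, (μ[fun ω' => (X ω') ^ 2 | ℱ t]) ω ∂μ) = ∫ ω, (X ω) ^ 2 ∂μ :=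
      integral_condExp (hle t)
    -- X is a.e. the martingale increment
    have hinc : (fun ω => M (t + 1) ω - M t ω) =ᵐ[μ] X := by
      have h1 := hdecomp (t + 1) ht
      have h2 := hdecomp t ht.le
      filter_upwards [h1, h2] with ω e1 e2
      have hsum : ∑ j ∈ Finset.Ico 0 (t + 1), r j ω
          = (∑ j ∈ Finset.Ico 0 t, r j ω) + r t ω :=
        Finset.sum_Ico_succ_top (Nat.zero_le t) _
      simp only [hXdef]
      rw [e1, e2, hsum]
      ring
    -- tower property
    have htower : μ[M (t + 1) | ℱ t] =ᵐ[μ] M t :=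
      condExp_condExp_of_le (hmono (Nat.le_succ t)) (hle (t + 1))
    have hvar : (∫ ω, (X ω) ^ 2 ∂μ)
        = (∫ ω, (M (t + 1) ω) ^ 2 ∂μ) - ∫ ω, (M t ω) ^ 2 ∂μ := by
      have e1 : (∫ ω, (X ω) ^ 2 ∂μ)
          = ∫ ω, (M (t + 1) ω - (μ[M (t + 1) | ℱ t]) ω) ^ 2 ∂μ := by
        refine integral_congr_ae ?_
        filter_upwards [hinc, htower] with ω e h
        simp only [← e, h]
      have e2 := var_decomp (μ := μ) (hle t) (hMm (t + 1)) hK0 (hMb (t + 1))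
      have e3 : (∫ ω, ((μ[M (t + 1) | ℱ t]) ω) ^ 2 ∂μ) = ∫ ω, (M t ω) ^ 2 ∂μ :=
        integral_congr_ae (htower.mono fun ω h => by simp [h])
      rw [e1, e2, e3]
    calc (∫ ω, (w (s t ω) / π (s t ω)) * (μ[fun ω' => (X ω') ^ 2 | ℱ t]) ω ∂μ)
        ≤ C₁ * C₂ * ∫ ω, (μ[fun ω' => (X ω') ^ 2 | ℱ t]) ω ∂μ := hA
      _ = C₁ * C₂ * ((∫ ω, (M (t + 1) ω) ^ 2 ∂μ) - ∫ ω, (M t ω) ^ 2 ∂μ) := by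
          rw [hB, hvar]
  -- sum the per-step bounds and telescope
  have hsum := Finset.sum_le_sum hterm
  have htel : ∑ t ∈ Finset.range H,
      C₁ * C₂ * ((∫ ω, (M (t + 1) ω) ^ 2 ∂μ) - ∫ ω, (M t ω) ^ 2 ∂μ)
      = C₁ * C₂ * ((∫ ω, (M H ω) ^ 2 ∂μ) - ∫ ω, (M 0 ω) ^ 2 ∂μ) := by
    rw [← Finset.mul_sum, Finset.sum_range_sub fun t => ∫ ω, (M t ω) ^ 2 ∂μ]
  -- M H = S 0 (the total return is ℱ H-measurable)
  have hTsm : StronglyMeasurable[ℱ H] (S 0) := by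
    refine Measurable.stronglyMeasurable ?_
    refine Finset.measurable_sum _ fun j hj => ?_
    exact (hradapt j).mono (hmono (by simp at hj; omega)) le_rfl
  have hMH : M H = S 0 := condExp_of_stronglyMeasurable (hle H) hTsm (hSi 0)
  have hT2 : (∫ ω, (S 0 ω) ^ 2 ∂μ) ≤ K ^ 2 := by
    have hTb : ∀ ω, (S 0 ω) ^ 2 ≤ K ^ 2 := fun ω => by
      rw [← sq_abs]
      exact pow_le_pow_left₀ (abs_nonneg _) (hSb 0 ω) 2
    calc (∫ ω, (S 0 ω) ^ 2 ∂μ) ≤ ∫ _ω, K ^ 2 ∂μ :=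
          integral_mono (hS2 0).integrable_sq (integrable_const _) hTb
      _ = K ^ 2 := by simp
  have hM0 : 0 ≤ ∫ ω, (M 0 ω) ^ 2 ∂μ := integral_nonneg fun ω => sq_nonneg _
  have hCC : 0 ≤ C₁ * C₂ := mul_nonneg hC₁.le hC₂
  calc (∑ t ∈ Finset.range H,
        ∫ ω, (w (s t ω) / π (s t ω)) *
            (μ[fun ω' =>
                (r t ω' + (μ[fun ω'' => ∑ j ∈ Finset.Ico (t + 1) H, r j ω'' | ℱ (t + 1)]) ω'
                    - (μ[fun ω'' => ∑ j ∈ Finset.Ico t H, r j ω'' | ℱ t]) ω') ^ 2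
               | ℱ t]) ω ∂μ)
      ≤ ∑ t ∈ Finset.range H,
          C₁ * C₂ * ((∫ ω, (M (t + 1) ω) ^ 2 ∂μ) - ∫ ω, (M t ω) ^ 2 ∂μ) := hsum
    _ = C₁ * C₂ * ((∫ ω, (M H ω) ^ 2 ∂μ) - ∫ ω, (M 0 ω) ^ 2 ∂μ) := htel
    _ ≤ C₁ * C₂ * (K ^ 2) := by
        refine mul_le_mul_of_nonneg_left ?_ hCC
        rw [hMH]
        linarith
    _ = C₁ * C₂ * R_max ^ 2 * H ^ 2 := by rw [hK]; ring
end
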